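/- Let H be a finite index set, and for each h ∈ H let C_h and T_h be natural numbers with T_h ≥ 1; let B be a natural number. Assume Σ_{h ∈ H} C_h / T_h < 1 (as rational numbers). Define g : ℕ → ℕ by g(s) = B + Σ_{h ∈ H} (⌊s / T_h⌋ + 1) · C_h, where ⌊s / T_h⌋ denotes floor division of natural numbers. Then g has a least fixed point, i.e., there exists s* ∈ ℕ with g(s*) = s* and s* ≤ s' for every s' ∈ ℕ with g(s') = s'. -/
import Mathlib


/-- The read-phase start-time recurrence `g s = B + Σ_h (⌊s / T_h⌋ + 1) · C_h`
(floor division on ℕ) has a least fixed point whenever the total utilization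
`Σ_h C_h / T_h` is below 1. -/
theorem start_time_least_fixed_point {ι : Type*} (H : Finset ι) (C T : ι → ℕ)
    (hT : ∀ h ∈ H, 1 ≤ T h) (B : ℕ)
    (hU : ∑ h ∈ H, (C h : ℚ) / (T h : ℚ) < 1) :
    ∃ s : ℕ, (B + ∑ h ∈ H, (s / T h + 1) * C h = s) ∧
      ∀ s' : ℕ, (B + ∑ h ∈ H, (s' / T h + 1) * C h = s') → s ≤ s' := by
  set g : ℕ → ℕ := fun s => B + ∑ h ∈ H, (s / T h + 1) * C h with hg
  have hmono : Monotone g := by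
    intro a b hab
    refine Nat.add_le_add_left (Finset.sum_le_sum fun h _ => ?_) B
    exact Nat.mul_le_mul_right _ (Nat.add_le_add_right (Nat.div_le_div_right hab) 1)
  set U : ℚ := ∑ h ∈ H, (C h : ℚ) / (T h : ℚ) with hUdef
  have hU0 : 0 ≤ U := Finset.sum_nonneg fun h _ => div_nonneg (by positivity) (by positivity)
  have h1U : 0 < 1 - U := by linarith
  set K : ℕ := B + ∑ h ∈ H, C h with hK
  have hbound : ∀ N : ℕ, (g N : ℚ) ≤ (K : ℚ) + U * N := by
    intro N
    have hterm : ∀ h ∈ H, (((N / T h + 1) * C h : ℕ) : ℚ)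
        ≤ (C h : ℚ) + ((C h : ℚ) / (T h : ℚ)) * N := by
      intro h _
      push_cast
      have hdiv : ((N / T h : ℕ) : ℚ) ≤ (N : ℚ) / (T h : ℚ) := Nat.cast_div_le
      have hC : (0 : ℚ) ≤ (C h : ℚ) := by positivity
      have : (((N / T h : ℕ) : ℚ) + 1) * C h ≤ ((N : ℚ) / (T h : ℚ) + 1) * C h := by
        apply mul_le_mul_of_nonneg_right _ hC
        linarith
      calc (((N / T h : ℕ) : ℚ) + 1) * C h ≤ ((N : ℚ) / (T h : ℚ) + 1) * C h := this
        _ = (C h : ℚ) + ((C h : ℚ) / (T h : ℚ)) * N := by ring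
    have := Finset.sum_le_sum hterm
    simp only [hg, hK, hUdef]
    push_cast
    push_cast at this
    rw [Finset.sum_mul]
    calc (B : ℚ) + ∑ h ∈ H, (((N / T h : ℕ) : ℚ) + 1) * C h
        ≤ (B : ℚ) + ∑ h ∈ H, ((C h : ℚ) + ((C h : ℚ) / (T h : ℚ)) * N) := by linarith
      _ = (B : ℚ) + ∑ h ∈ H, (C h : ℚ) + ∑ h ∈ H, ((C h : ℚ) / (T h : ℚ)) * N := by
          rw [Finset.sum_add_distrib]; ring
      _ = _ := by ring
  -- a pre-fixed point
  obtain ⟨N, hN⟩ : ∃ N : ℕ, g N ≤ N := by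
    refine ⟨⌈(K : ℚ) / (1 - U)⌉₊, ?_⟩
    set N := ⌈(K : ℚ) / (1 - U)⌉₊ with hNdef
    have hle : (K : ℚ) / (1 - U) ≤ (N : ℚ) := Nat.le_ceil _
    have hKle : (K : ℚ) ≤ (1 - U) * N := by
      rw [div_le_iff₀ h1U] at hle
      linarith
    have : (g N : ℚ) ≤ (N : ℚ) := by
      calc (g N : ℚ) ≤ (K : ℚ) + U * N := hbound N
        _ ≤ (N : ℚ) := by nlinarith
    exact_mod_cast this
  have hex : ∃ s, g s ≤ s := ⟨N, hN⟩
  set m := Nat.find hex with hm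
  have hmle : g m ≤ m := Nat.find_spec hex
  have hgm : g (g m) ≤ g m := hmono hmle
  have hmge : m ≤ g m := Nat.find_min' hex hgm
  refine ⟨m, le_antisymm hmle hmge, fun s' hs' => Nat.find_min' hex (le_of_eq hs')⟩
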